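/- Ratio asymptotics for the monic big q-Jacobi polynomials with a=b=0 under the scaling q = r^{1/n}: for fixed r ∈ (0,1), c,d>0, and x ∈ ℂ∖[-d,c], lim_{n→∞} P̂_{n+1}(x;0,0,c,d;r^{1/n})/P̂_n(x;0,0,c,d;r^{1/n}) = √(rcd(1-r)) · ρ((x - r(c-d))/(2√(rcd(1-r)))), where ρ(z) = z + √(z²-1) with the branch of the square root chosen so that |ρ(z)| > 1 for z ∉ [-1,1]. -/

import Mathlib

set_option maxHeartbeats 1000000

open Filter

/-- monic big q-Jacobi polynomial with `a = b = 0`, via its three-term recurrence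
`P̂_{n+1}(x) = (x - q^n(c-d)) P̂_n(x) - q^{n-1} c d (1-q^n) P̂_{n-1}(x)`,
`P̂_0 = 1`, `P̂_1(x) = x - (c-d)`. -/
noncomputable def PhatC (q c d : ℂ) : ℕ → ℂ → ℂ
  | 0, _ => 1
  | 1, x => x - (c - d)
  | (n + 2), x =>
      (x - q ^ (n + 1) * (c - d)) * PhatC q c d (n + 1) x
        - q ^ n * c * d * (1 - q ^ (n + 1)) * PhatC q c d n x

noncomputable def Complex.abs : AbsoluteValue ℂ ℝ := IsAbsoluteValue.toAbsoluteValue (norm : ℂ → ℝ)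

@[simp] lemma Complex.abs_eq_norm' (z : ℂ) : Complex.abs z = ‖z‖ := rfl
lemma Complex.abs_apply (z : ℂ) : Complex.abs z = Real.sqrt (Complex.normSq z) := Complex.norm_def z
lemma Complex.abs_re_le_abs (z : ℂ) : |z.re| ≤ Complex.abs z := Complex.abs_re_le_norm z
lemma Complex.sq_abs (z : ℂ) : Complex.abs z ^ 2 = Complex.normSq z := Complex.sq_norm z
lemma Complex.normSq_eq_abs (z : ℂ) : Complex.normSq z = Complex.abs z ^ 2 := Complex.normSq_eq_norm_sq z
lemma Complex.abs_ofReal (y : ℝ) : Complex.abs (y : ℂ) = |y| := Complex.norm_real y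
lemma Complex.abs_conj (z : ℂ) : Complex.abs ((starRingEnd ℂ) z) = Complex.abs z := Complex.norm_conj z
lemma Complex.continuous_abs : Continuous (fun z : ℂ => Complex.abs z) := continuous_norm

section csqrtAux

noncomputable def csqrt (z : ℂ) : ℂ :=
  ⟨Real.sqrt ((Complex.abs z + z.re)/2),
   (if z.im < 0 then (-1:ℝ) else 1) * Real.sqrt ((Complex.abs z - z.re)/2)⟩

@[simp] lemma csqrt_re (z : ℂ) : (csqrt z).re = Real.sqrt ((Complex.abs z + z.re)/2) := rfl
@[simp] lemma csqrt_im (z : ℂ) :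
    (csqrt z).im = (if z.im < 0 then (-1:ℝ) else 1) * Real.sqrt ((Complex.abs z - z.re)/2) := rfl

lemma csqrt_mul_self (z : ℂ) : csqrt z * csqrt z = z := by
  have h1 : 0 ≤ (Complex.abs z + z.re)/2 := by
    have := Complex.abs_re_le_abs z
    have := abs_le.mp this
    linarith [this.1]
  have h2 : 0 ≤ (Complex.abs z - z.re)/2 := by
    have := abs_le.mp (Complex.abs_re_le_abs z)
    linarith [this.2]
  have hXY : ((Complex.abs z + z.re)/2) * ((Complex.abs z - z.re)/2) = (z.im/2)^2 := by
    have := Complex.sq_abs z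
    rw [Complex.normSq_apply] at this
    nlinarith [this]
  have hs : Real.sqrt ((Complex.abs z + z.re)/2) * Real.sqrt ((Complex.abs z - z.re)/2) = |z.im|/2 := by
    rw [← Real.sqrt_mul h1, hXY, Real.sqrt_sq_eq_abs, abs_div]
    norm_num
  apply Complex.ext
  · simp only [Complex.mul_re, csqrt_re, csqrt_im]
    rw [Real.mul_self_sqrt h1]
    split_ifs with h
    · rw [show (-1:ℝ) * Real.sqrt ((Complex.abs z - z.re)/2) * ((-1) * Real.sqrt ((Complex.abs z - z.re)/2)) = Real.sqrt ((Complex.abs z - z.re)/2) * Real.sqrt ((Complex.abs z - z.re)/2) by ring, Real.mul_self_sqrt h2]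
      ring
    · rw [one_mul, Real.mul_self_sqrt h2]; ring
  · simp only [Complex.mul_im, csqrt_re, csqrt_im]
    split_ifs with h
    · have habs : |z.im| = -z.im := abs_of_neg h
      nlinarith [hs]
    · have habs : |z.im| = z.im := abs_of_nonneg (not_lt.mp h)
      nlinarith [hs]

lemma csqrt_sq (z : ℂ) : (csqrt z)^2 = z := by rw [sq, csqrt_mul_self]

lemma abs_csqrt (z : ℂ) : Complex.abs (csqrt z) = Real.sqrt (Complex.abs z) := by
  have h1 : 0 ≤ (Complex.abs z + z.re)/2 := by
    have := abs_le.mp (Complex.abs_re_le_abs z); linarith [this.1]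
  have h2 : 0 ≤ (Complex.abs z - z.re)/2 := by
    have := abs_le.mp (Complex.abs_re_le_abs z); linarith [this.2]
  rw [Complex.abs_apply, Complex.normSq_apply]
  congr 1
  simp only [csqrt_re, csqrt_im]
  split_ifs with h
  · rw [show (-1:ℝ) * Real.sqrt ((Complex.abs z - z.re)/2) * ((-1) * Real.sqrt ((Complex.abs z - z.re)/2)) = Real.sqrt ((Complex.abs z - z.re)/2) * Real.sqrt ((Complex.abs z - z.re)/2) by ring]
    rw [Real.mul_self_sqrt h1, Real.mul_self_sqrt h2]; ring
  · rw [one_mul, Real.mul_self_sqrt h1, Real.mul_self_sqrt h2]; ring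

lemma csqrt_re_nonneg (z : ℂ) : 0 ≤ (csqrt z).re := Real.sqrt_nonneg _

lemma abs_sub_le_abs_add (z₁ z₂ : ℂ) (h : z₁.im = z₂.im) :
    Complex.abs ((z₁ + z₂) - 2*(csqrt z₁ * csqrt z₂)) ≤
      Complex.abs ((z₁ + z₂) + 2*(csqrt z₁ * csqrt z₂)) := by
  set p := csqrt z₁ with hp
  set q := csqrt z₂ with hq
  have hz₁ : z₁ = p * p := (csqrt_mul_self z₁).symm
  have hz₂ : z₂ = q * q := (csqrt_mul_self z₂).symm
  have hpre : 0 ≤ p.re := csqrt_re_nonneg z₁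
  have hqre : 0 ≤ q.re := csqrt_re_nonneg z₂
  have him : 0 ≤ p.im * q.im := by
    rw [hp, hq, csqrt_im, csqrt_im, h]
    split_ifs with h1
    · nlinarith [Real.sqrt_nonneg ((Complex.abs z₁ - z₁.re)/2), Real.sqrt_nonneg ((Complex.abs z₂ - z₂.re)/2)]
    · nlinarith [Real.sqrt_nonneg ((Complex.abs z₁ - z₁.re)/2), Real.sqrt_nonneg ((Complex.abs z₂ - z₂.re)/2)]
  rw [hz₁, hz₂]
  have key : 0 ≤ (p.re*p.re + p.im*p.im + q.re*q.re + q.im*q.im) * (p.re*q.re + p.im*q.im) :=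
    mul_nonneg (by nlinarith [mul_self_nonneg p.re, mul_self_nonneg p.im, mul_self_nonneg q.re,
      mul_self_nonneg q.im]) (add_nonneg (mul_nonneg hpre hqre) him)
  have hns : Complex.normSq ((p*p + q*q) - 2*(p*q)) ≤ Complex.normSq ((p*p + q*q) + 2*(p*q)) := by
    simp only [Complex.normSq_apply, Complex.add_re, Complex.add_im, Complex.sub_re,
      Complex.sub_im, Complex.mul_re, Complex.mul_im, Complex.re_ofNat, Complex.im_ofNat]
    nlinarith [key]
  rw [Complex.abs_apply, Complex.abs_apply]
  exact Real.sqrt_le_sqrt hns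

lemma key_quant (B T T' : ℂ) (A D₂ : ℝ) (hA : 0 ≤ A) (hD₂ : 0 < D₂)
    (hsum : T + T' = B) (hprod : T * T' = (A:ℂ))
    (hle : Complex.abs T' ≤ Complex.abs T)
    (hdist : ∀ t : ℝ, |t| ≤ 1 → D₂ ≤ Complex.abs (B - ((2*Real.sqrt A*t : ℝ) : ℂ))) :
    D₂ ≤ Complex.abs T ∧ A + D₂ * Complex.abs T ≤ (Complex.abs T)^2 := by
  have hT0 : T ≠ 0 := by
    intro h
    have hT'0 : T' = 0 := by
      have : Complex.abs T' ≤ 0 := by simpa [h] using hle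
      exact Complex.abs.eq_zero.mp (le_antisymm this (Complex.abs.nonneg _))
    have hB : B = 0 := by rw [← hsum, h, hT'0, add_zero]
    have := hdist 0 (by norm_num)
    simp [hB] at this
    linarith
  set R := Complex.abs T with hR
  have hR0 : 0 < R := Complex.abs.pos hT0
  have hRne : ((R:ℝ) : ℂ) ≠ 0 := by exact_mod_cast hR0.ne'
  set v : ℂ := T / (R:ℂ) with hv
  have hvabs : Complex.abs v = 1 := by
    rw [hv, map_div₀, Complex.abs_ofReal, abs_of_pos hR0, div_self hR0.ne']
  have hTv : T = (R:ℂ) * v := by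
    rw [hv, mul_comm, div_mul_cancel₀ _ hRne]
  set t := v.re with ht
  have htle : |t| ≤ 1 := by
    have := Complex.abs_re_le_abs v; rwa [hvabs] at this
  have hvv : v * (starRingEnd ℂ) v = 1 := by
    rw [Complex.mul_conj, Complex.normSq_eq_abs, hvabs]; norm_num
  have hvre : v + (starRingEnd ℂ) v = ((2*t : ℝ) : ℂ) := by
    rw [Complex.add_conj]
  have hquad : T^2 = B*T - (A:ℂ) := by linear_combination T*hsum - hprod
  have ha2 : ((Real.sqrt A : ℝ) : ℂ)^2 = (A:ℂ) := by
    norm_cast; exact Real.sq_sqrt hA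
  have hRA : Real.sqrt A ≤ R := by
    have hAR : A ≤ R^2 := by
      have h1 : Complex.abs (T*T') = A := by rw [hprod, Complex.abs_ofReal, abs_of_nonneg hA]
      have h2 : Complex.abs T * Complex.abs T' ≤ R * R :=
        mul_le_mul_of_nonneg_left hle (Complex.abs.nonneg T)
      rw [map_mul] at h1
      nlinarith
    calc Real.sqrt A ≤ Real.sqrt (R^2) := Real.sqrt_le_sqrt hAR
    _ = R := Real.sqrt_sq hR0.le
  have hident : (T - (Real.sqrt A : ℂ) * v) * (T - (Real.sqrt A : ℂ) * (starRingEnd ℂ) v)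
      = T * (B - ((2*Real.sqrt A*t : ℝ):ℂ)) := by
    push_cast at hvre ⊢
    linear_combination hquad + ((Real.sqrt A : ℂ))^2 * hvv - ((Real.sqrt A:ℂ)*T) * hvre + ha2
  have habs1 : Complex.abs (T - (Real.sqrt A : ℂ) * v) = R - Real.sqrt A := by
    have hrw : T - (Real.sqrt A : ℂ) * v = (((R - Real.sqrt A : ℝ)):ℂ) * v := by
      rw [hTv]; push_cast; ring
    rw [hrw, map_mul, hvabs, Complex.abs_ofReal, mul_one, abs_of_nonneg (by linarith)]
  have habs2 : Complex.abs (T - (Real.sqrt A : ℂ) * (starRingEnd ℂ) v) ≤ R + Real.sqrt A := by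
    have h1 := Complex.abs.add_le T (-(((Real.sqrt A : ℝ):ℂ) * (starRingEnd ℂ) v))
    rw [← sub_eq_add_neg] at h1
    have h2 : Complex.abs (-(((Real.sqrt A : ℝ):ℂ) * (starRingEnd ℂ) v)) = Real.sqrt A := by
      rw [Complex.abs.map_neg, map_mul, Complex.abs_conj, hvabs, mul_one, Complex.abs_ofReal,
        abs_of_nonneg (Real.sqrt_nonneg A)]
    rw [h2] at h1
    exact h1
  have hmain : R * D₂ ≤ R^2 - A := by
    have h1 := congrArg Complex.abs hident
    rw [map_mul, map_mul, habs1] at h1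
    have h2 : R * D₂ ≤ R * Complex.abs (B - ((2*Real.sqrt A*t : ℝ):ℂ)) :=
      mul_le_mul_of_nonneg_left (hdist t htle) hR0.le
    have h3 : (R - Real.sqrt A) * Complex.abs (T - (Real.sqrt A : ℂ) * (starRingEnd ℂ) v)
        ≤ (R - Real.sqrt A) * (R + Real.sqrt A) :=
      mul_le_mul_of_nonneg_left habs2 (by linarith)
    have h4 : (R - Real.sqrt A) * (R + Real.sqrt A) = R^2 - A := by
      have := Real.sq_sqrt hA; nlinarith
    nlinarith [h1, h2, h3, h4]
  constructor
  · nlinarith [hmain, hR0]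
  · nlinarith [hmain]

lemma Gfacts (x : ℂ) (y A D₂ : ℝ) (hA : 0 ≤ A) (hD₂ : 0 < D₂)
    (hdist : ∀ t : ℝ, |t| ≤ 1 → D₂ ≤ Complex.abs (x - ((y + 2*Real.sqrt A*t : ℝ) : ℂ)))
    (T : ℂ)
    (hT : T = ((x - (y:ℂ)) +
      csqrt (x - ((y + 2*Real.sqrt A : ℝ):ℂ)) * csqrt (x - ((y - 2*Real.sqrt A : ℝ):ℂ)))/2) :
    T^2 - (x - (y:ℂ))*T + (A:ℂ) = 0 ∧ D₂ ≤ Complex.abs T ∧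
      A + D₂ * Complex.abs T ≤ (Complex.abs T)^2 ∧
      Complex.abs T ≤ Complex.abs (x - (y:ℂ)) + Real.sqrt A := by
  set B : ℂ := x - (y:ℂ) with hB
  set z₁ : ℂ := x - ((y + 2*Real.sqrt A : ℝ):ℂ) with hz₁
  set z₂ : ℂ := x - ((y - 2*Real.sqrt A : ℝ):ℂ) with hz₂
  set s : ℂ := csqrt z₁ * csqrt z₂ with hs
  have hzB : z₁ + z₂ = 2*B := by rw [hz₁, hz₂, hB]; push_cast; ring
  have hz₁B : z₁ = B - ((2*Real.sqrt A : ℝ):ℂ) := by rw [hz₁, hB]; push_cast; ring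
  have hz₂B : z₂ = B + ((2*Real.sqrt A : ℝ):ℂ) := by rw [hz₂, hB]; push_cast; ring
  have hsq : s^2 = B^2 - ((4*A : ℝ):ℂ) := by
    have : s^2 = z₁ * z₂ := by
      rw [hs]; rw [show (csqrt z₁ * csqrt z₂)^2 = (csqrt z₁ * csqrt z₁) * (csqrt z₂ * csqrt z₂) by ring,
        csqrt_mul_self, csqrt_mul_self]
    rw [this, hz₁B, hz₂B]
    have h4 : ((2*Real.sqrt A : ℝ):ℂ)^2 = ((4*A : ℝ):ℂ) := by
      push_cast
      have : (Real.sqrt A : ℂ)^2 = (A:ℂ) := by norm_cast; exact Real.sq_sqrt hA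
      linear_combination 4*this
    linear_combination -h4
  set T' : ℂ := (B - s)/2 with hT'
  have hsum : T + T' = B := by rw [hT, hT']; ring
  have hprod : T * T' = (A:ℂ) := by
    rw [hT, hT']
    have : (B + s)/2 * ((B - s)/2) = (B^2 - s^2)/4 := by ring
    rw [this, hsq]; push_cast; ring
  have hle : Complex.abs T' ≤ Complex.abs T := by
    have h1 := abs_sub_le_abs_add z₁ z₂ (by rw [hz₁, hz₂]; simp)
    have e1 : (z₁ + z₂) - 2*(csqrt z₁ * csqrt z₂) = 4*T' := by rw [hT', hzB, ← hs]; ring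
    have e2 : (z₁ + z₂) + 2*(csqrt z₁ * csqrt z₂) = 4*T := by rw [hT, hzB, ← hs]; ring
    rw [e1, e2, map_mul, map_mul] at h1
    have h4 : (0:ℝ) < Complex.abs (4:ℂ) := by norm_num
    exact le_of_mul_le_mul_left h1 h4
  have hdist' : ∀ t : ℝ, |t| ≤ 1 → D₂ ≤ Complex.abs (B - ((2*Real.sqrt A*t : ℝ) : ℂ)) := by
    intro t ht
    have : B - ((2*Real.sqrt A*t : ℝ) : ℂ) = x - ((y + 2*Real.sqrt A*t : ℝ):ℂ) := by
      rw [hB]; push_cast; ring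
    rw [this]; exact hdist t ht
  obtain ⟨hq1, hq2⟩ := key_quant B T T' A D₂ hA hD₂ hsum hprod hle hdist'
  refine ⟨?_, hq1, hq2, ?_⟩
  · linear_combination T*hsum - hprod
  · have habs_s : Complex.abs s ≤ Complex.abs B + 2*Real.sqrt A := by
      have h1 : Complex.abs z₁ ≤ Complex.abs B + 2*Real.sqrt A := by
        rw [hz₁B]
        calc Complex.abs (B - ((2*Real.sqrt A:ℝ):ℂ)) ≤ Complex.abs B + Complex.abs (-((2*Real.sqrt A:ℝ):ℂ)) := by
              rw [sub_eq_add_neg]; exact Complex.abs.add_le _ _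
        _ = Complex.abs B + 2*Real.sqrt A := by
              rw [Complex.abs.map_neg, Complex.abs_ofReal,
                abs_of_nonneg (by positivity : (0:ℝ) ≤ 2*Real.sqrt A)]
      have h2 : Complex.abs z₂ ≤ Complex.abs B + 2*Real.sqrt A := by
        rw [hz₂B]
        calc Complex.abs (B + ((2*Real.sqrt A:ℝ):ℂ)) ≤ Complex.abs B + Complex.abs (((2*Real.sqrt A:ℝ):ℂ)) :=
              Complex.abs.add_le _ _
        _ = Complex.abs B + 2*Real.sqrt A := by
              rw [Complex.abs_ofReal, abs_of_nonneg (by positivity : (0:ℝ) ≤ 2*Real.sqrt A)]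
      have hC : 0 ≤ Complex.abs B + 2*Real.sqrt A := by positivity
      rw [hs, map_mul, abs_csqrt, abs_csqrt]
      calc Real.sqrt (Complex.abs z₁) * Real.sqrt (Complex.abs z₂)
          ≤ Real.sqrt (Complex.abs B + 2*Real.sqrt A) * Real.sqrt (Complex.abs B + 2*Real.sqrt A) :=
            mul_le_mul (Real.sqrt_le_sqrt h1) (Real.sqrt_le_sqrt h2) (Real.sqrt_nonneg _) (Real.sqrt_nonneg _)
        _ = Complex.abs B + 2*Real.sqrt A := Real.mul_self_sqrt hC
    have : Complex.abs T ≤ (Complex.abs B + Complex.abs s)/2 := by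
      rw [hT]
      rw [map_div₀]
      have : Complex.abs (B + s) ≤ Complex.abs B + Complex.abs s := Complex.abs.add_le _ _
      have h2 : Complex.abs (2:ℂ) = 2 := by norm_num
      rw [h2]
      linarith
    linarith

lemma two_sqrt_mul_le (a b : ℝ) (ha : 0 ≤ a) (hb : 0 ≤ b) : 2*Real.sqrt (a*b) ≤ a + b := by
  rw [Real.sqrt_mul ha]
  nlinarith [sq_nonneg (Real.sqrt a - Real.sqrt b), Real.sq_sqrt ha, Real.sq_sqrt hb,
    Real.sqrt_nonneg a, Real.sqrt_nonneg b]

lemma sqrt_add_le' (a b : ℝ) (ha : 0 ≤ a) (hb : 0 ≤ b) :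
    Real.sqrt (a + b) ≤ Real.sqrt a + Real.sqrt b := by
  have h : a + b ≤ (Real.sqrt a + Real.sqrt b)^2 := by
    nlinarith [Real.sq_sqrt ha, Real.sq_sqrt hb, Real.sqrt_nonneg a, Real.sqrt_nonneg b,
      mul_nonneg (Real.sqrt_nonneg a) (Real.sqrt_nonneg b)]
  calc Real.sqrt (a+b) ≤ Real.sqrt ((Real.sqrt a + Real.sqrt b)^2) := Real.sqrt_le_sqrt h
  _ = Real.sqrt a + Real.sqrt b := Real.sqrt_sq (by positivity)

lemma contain (c d θ : ℝ) (hc : 0 < c) (hd : 0 < d) (hθ0 : 0 ≤ θ) (hθ1 : θ ≤ 1) :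
    θ*(c-d) + 2*Real.sqrt (θ*(c*d*(1-θ))) ≤ c ∧
      -d ≤ θ*(c-d) - 2*Real.sqrt (θ*(c*d*(1-θ))) := by
  have h1 : θ*(c*d*(1-θ)) = (c*(1-θ))*(θ*d) := by ring
  have h2 : θ*(c*d*(1-θ)) = (θ*c)*(d*(1-θ)) := by ring
  constructor
  · have := two_sqrt_mul_le (c*(1-θ)) (θ*d) (by nlinarith) (by nlinarith)
    rw [← h1] at this
    nlinarith
  · have := two_sqrt_mul_le (θ*c) (d*(1-θ)) (by nlinarith) (by nlinarith)
    rw [← h2] at this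
    nlinarith

lemma dist_bound (c d : ℝ) (hc : 0 < c) (hd : 0 < d) (x : ℂ) (D : ℝ)
    (hDle : ∀ y : ℝ, -d ≤ y → y ≤ c → D ≤ Complex.abs (x - (y:ℂ)))
    (θ σ e : ℝ) (hθ0 : 0 ≤ θ) (hθ1 : θ ≤ 1) (hθσ : θ ≤ σ) (hσ1 : σ ≤ 1)
    (hσθe : σ - θ ≤ e) (he : 0 ≤ e)
    (hkap : 2*Real.sqrt (c*d*e) ≤ D/2) (hD0 : 0 < D)
    (t : ℝ) (ht : |t| ≤ 1) :
    D/2 ≤ Complex.abs (x - ((θ*(c-d) + 2*Real.sqrt (σ*(c*d*(1-θ)))*t : ℝ):ℂ)) := by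
  set A : ℝ := σ*(c*d*(1-θ)) with hA
  have hσ0 : 0 ≤ σ := le_trans hθ0 hθσ
  have hcd1θ : 0 ≤ c*d*(1-θ) := mul_nonneg (by positivity) (by linarith)
  have hA0 : 0 ≤ A := by rw [hA]; exact mul_nonneg hσ0 hcd1θ
  have hsA : 0 ≤ Real.sqrt A := Real.sqrt_nonneg A
  set g : ℝ := 2*Real.sqrt A*t with hg
  have hgabs : |g| ≤ 2*Real.sqrt A := by
    rw [hg, abs_mul, abs_of_nonneg (by positivity : (0:ℝ) ≤ 2*Real.sqrt A)]
    nlinarith [abs_nonneg t]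
  have h2A : 2*Real.sqrt A ≤ 2*Real.sqrt (θ*(c*d*(1-θ))) + D/2 := by
    have hle : A ≤ θ*(c*d*(1-θ)) + c*d*e := by
      have h1 : (σ-θ)*(c*d*(1-θ)) ≤ e*(c*d*(1-θ)) := mul_le_mul_of_nonneg_right hσθe hcd1θ
      have h2 : e*(c*d*(1-θ)) ≤ e*(c*d) := by
        apply mul_le_mul_of_nonneg_left _ he
        nlinarith [mul_pos hc hd]
      have h3 : A = θ*(c*d*(1-θ)) + (σ-θ)*(c*d*(1-θ)) := by rw [hA]; ring
      nlinarith
    have := sqrt_add_le' (θ*(c*d*(1-θ))) (c*d*e) (mul_nonneg hθ0 hcd1θ) (by positivity)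
    have h3 := Real.sqrt_le_sqrt hle
    linarith [h3.trans this]
  obtain ⟨hco1, hco2⟩ := contain c d θ hc hd hθ0 hθ1
  set P : ℝ := θ*(c-d) with hP
  set y : ℝ := P + g with hy
  have hyc : y ≤ c + D/2 := by
    have : g ≤ 2*Real.sqrt A := (abs_le.mp hgabs).2
    have h0 : 0 ≤ Real.sqrt (θ*(c*d*(1-θ))) := Real.sqrt_nonneg _
    nlinarith [hco1]
  have hyd : -d - D/2 ≤ y := by
    have : -(2*Real.sqrt A) ≤ g := (abs_le.mp hgabs).1
    nlinarith [hco2]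
  set y' : ℝ := max (-d) (min c y) with hy'
  have hy'1 : -d ≤ y' := le_max_left _ _
  have hy'2 : y' ≤ c := by
    rw [hy']
    apply max_le (by linarith) (min_le_left _ _)
  have hyy' : |y - y'| ≤ D/2 := by
    rcases le_total y (-d) with h | h
    · have hmin : min c y = y := min_eq_right (by linarith)
      have : y' = -d := by rw [hy', hmin]; exact max_eq_left (by linarith)
      rw [this, abs_le]; constructor <;> linarith
    · rcases le_total y c with h2 | h2
      · have : y' = y := by
          rw [hy', min_eq_right h2]; exact max_eq_right h
        rw [this]; simp; linarith
      · have : y' = c := by rw [hy', min_eq_left h2]; exact max_eq_right (by linarith)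
        rw [this, abs_le]; constructor <;> linarith
  have htri : Complex.abs (x - (y':ℂ)) ≤ Complex.abs (x - (y:ℂ)) + |y - y'| := by
    have : x - (y':ℂ) = (x - (y:ℂ)) + ((y - y' : ℝ):ℂ) := by push_cast; ring
    rw [this]
    calc Complex.abs ((x - (y:ℂ)) + ((y - y' : ℝ):ℂ))
        ≤ Complex.abs (x - (y:ℂ)) + Complex.abs ((y - y' : ℝ):ℂ) := Complex.abs.add_le _ _
      _ = Complex.abs (x - (y:ℂ)) + |y - y'| := by rw [Complex.abs_ofReal]
  have hDy' := hDle y' hy'1 hy'2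
  have : D/2 ≤ Complex.abs (x - (y:ℂ)) := by linarith
  simpa [hy, hg, hP] using this

noncomputable def Gfun (x : ℂ) (c d : ℝ) (p : ℝ × ℝ) : ℂ :=
  ((x - ((p.1*(c - d) : ℝ) : ℂ)) +
    csqrt (x - ((p.1*(c - d) + 2*Real.sqrt (p.2*(c*d*(1 - p.1))) : ℝ) : ℂ)) *
    csqrt (x - ((p.1*(c - d) - 2*Real.sqrt (p.2*(c*d*(1 - p.1))) : ℝ) : ℂ)))/2

lemma csqrt_ofReal_offset (x : ℂ) (y : ℝ) :
    csqrt (x - (y:ℂ)) = ((Real.sqrt ((Complex.abs (x - (y:ℂ)) + (x.re - y))/2) : ℝ) : ℂ)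
      + (((if x.im < 0 then (-1:ℝ) else 1) * Real.sqrt ((Complex.abs (x - (y:ℂ)) - (x.re - y))/2) : ℝ) : ℂ) * Complex.I := by
  apply Complex.ext <;>
    simp [csqrt, Complex.sub_re, Complex.sub_im, Complex.ofReal_re, Complex.ofReal_im]

lemma continuous_csqrt_offset (x : ℂ) {f : ℝ × ℝ → ℝ} (hf : Continuous f) :
    Continuous (fun p => csqrt (x - ((f p : ℝ) : ℂ))) := by
  have habs : Continuous (fun p => Complex.abs (x - ((f p : ℝ):ℂ))) :=
    Complex.continuous_abs.comp (continuous_const.sub (Complex.continuous_ofReal.comp hf))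
  have h1 : Continuous (fun p => (Real.sqrt ((Complex.abs (x - ((f p : ℝ):ℂ)) + (x.re - f p))/2) : ℝ)) :=
    Real.continuous_sqrt.comp (by fun_prop)
  have h2 : Continuous (fun p => ((if x.im < 0 then (-1:ℝ) else 1) * Real.sqrt ((Complex.abs (x - ((f p : ℝ):ℂ)) - (x.re - f p))/2) : ℝ)) := by
    apply continuous_const.mul
    exact Real.continuous_sqrt.comp (by fun_prop)
  have : (fun p => csqrt (x - ((f p : ℝ) : ℂ)))
      = fun p => ((Real.sqrt ((Complex.abs (x - ((f p : ℝ):ℂ)) + (x.re - f p))/2) : ℝ) : ℂ)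
        + (((if x.im < 0 then (-1:ℝ) else 1) * Real.sqrt ((Complex.abs (x - ((f p:ℝ):ℂ)) - (x.re - f p))/2) : ℝ) : ℂ) * Complex.I := by
    funext p; exact csqrt_ofReal_offset x (f p)
  rw [this]
  exact ((Complex.continuous_ofReal.comp h1).add
    ((Complex.continuous_ofReal.comp h2).mul continuous_const))

lemma Gfun_continuous (x : ℂ) (c d : ℝ) : Continuous (Gfun x c d) := by
  unfold Gfun
  have hf0 : Continuous (fun p : ℝ × ℝ => p.1*(c-d)) := by fun_prop
  have hsq : Continuous (fun p : ℝ × ℝ => Real.sqrt (p.2*(c*d*(1-p.1)))) :=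
    Real.continuous_sqrt.comp (by fun_prop)
  have hf1 : Continuous (fun p : ℝ × ℝ => p.1*(c-d) + 2*Real.sqrt (p.2*(c*d*(1-p.1)))) := by
    exact hf0.add (continuous_const.mul hsq)
  have hf2 : Continuous (fun p : ℝ × ℝ => p.1*(c-d) - 2*Real.sqrt (p.2*(c*d*(1-p.1)))) := by
    exact hf0.sub (continuous_const.mul hsq)
  apply Continuous.div_const
  apply Continuous.add
  · exact continuous_const.sub (Complex.continuous_ofReal.comp hf0)
  · exact (continuous_csqrt_offset x hf1).mul (continuous_csqrt_offset x hf2)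

noncomputable def tseq (x : ℂ) (c d q : ℝ) : ℕ → ℂ
  | 0 => x - (((c - d) : ℝ) : ℂ)
  | (k+1) => (x - ((q^(k+1)*(c - d) : ℝ) : ℂ))
      - ((q^k*(c*d*(1 - q^(k+1))) : ℝ) : ℂ) / tseq x c d q k


lemma fixedn (r c d : ℝ) (hc : 0 < c) (hd : 0 < d) (x : ℂ)
    (D M lam lam' eta : ℝ) (hD0 : 0 < D)
    (hDle : ∀ y : ℝ, -d ≤ y → y ≤ c → D ≤ Complex.abs (x - (y:ℂ)))
    (hM : M = Complex.abs x + (c + d) + Real.sqrt (c*d))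
    (hDM : D ≤ M)
    (hlam : lam = 1 - D/(2*M)) (hlam' : lam' = (1+lam)/2)
    (heta0 : 0 < eta) (hetaE : eta ≤ (1-lam)*D/16 * (1-lam'))
    (q : ℝ) (hq0 : 0 < q) (hq1 : q ≤ 1)
    (n : ℕ)
    (hkappa : 2*Real.sqrt (c*d*(1-q)) ≤ D/2)
    (hmove : ∀ k, k < n →
      Complex.abs (Gfun x c d (q^(k+1), q^k) - Gfun x c d (q^k, q^(k-1))) ≤ eta) :
    ∀ k, k ≤ n →
      Complex.abs (tseq x c d q k - Gfun x c d (q^k, q^(k-1))) ≤ eta*lam'/(1-lam')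
      ∧ PhatC (q:ℂ) (c:ℂ) (d:ℂ) (k+1) x = tseq x c d q k * PhatC (q:ℂ) (c:ℂ) (d:ℂ) k x
      ∧ PhatC (q:ℂ) (c:ℂ) (d:ℂ) k x ≠ 0 := by
  have hM0 : 0 < M := lt_of_lt_of_le hD0 hDM
  have hD2M : D/(2*M) ≤ 1/2 := by rw [div_le_iff₀ (by linarith)]; linarith
  have hD2M0 : 0 < D/(2*M) := by positivity
  have hlam_lb : 1/2 ≤ lam := by rw [hlam]; linarith
  have hlam_ub : lam < 1 := by rw [hlam]; linarith
  have hlam'_lb : 3/4 ≤ lam' := by rw [hlam']; linarith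
  have hlam'_ub : lam' < 1 := by rw [hlam']; linarith
  have h1l' : 0 < 1 - lam' := by linarith
  have h1l'M : (1 - lam')*M = D/4 := by
    rw [hlam', hlam]; field_simp; ring
  set E : ℝ := eta*lam'/(1-lam') with hE
  have hE_eq : lam'*(E + eta) = E := by
    rw [hE]; field_simp; ring
  have hE0 : 0 ≤ E := by positivity
  have heps32 : (1-lam)*D/16 ≤ D/32 := by nlinarith
  have hetaD' : eta ≤ D/32 * (1 - lam') :=
    le_trans hetaE (mul_le_mul_of_nonneg_right heps32 h1l'.le)
  have hetaD : eta ≤ D/32 := by nlinarith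
  have hE32 : E ≤ D/32 := by
    have h5 : eta * lam' ≤ eta * 1 := mul_le_mul_of_nonneg_left hlam'_ub.le heta0.le
    rw [hE, div_le_iff₀ h1l']
    nlinarith [hetaD']
  -- per-index facts
  have hGf : ∀ k, k ≤ n →
      (Gfun x c d (q^k, q^(k-1)))^2 - (x - ((q^k*(c-d) : ℝ):ℂ))*(Gfun x c d (q^k, q^(k-1)))
        + ((q^(k-1)*(c*d*(1-q^k)) : ℝ):ℂ) = 0
      ∧ D/2 ≤ Complex.abs (Gfun x c d (q^k, q^(k-1)))
      ∧ (q^(k-1)*(c*d*(1-q^k))) + D/2 * Complex.abs (Gfun x c d (q^k, q^(k-1)))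
          ≤ (Complex.abs (Gfun x c d (q^k, q^(k-1))))^2
      ∧ Complex.abs (Gfun x c d (q^k, q^(k-1))) ≤ M := by
    intro k hk
    have hθ0 : 0 ≤ q^k := pow_nonneg hq0.le k
    have hθ1 : q^k ≤ 1 := pow_le_one₀ hq0.le hq1
    have hσ0 : 0 ≤ q^(k-1) := pow_nonneg hq0.le _
    have hσ1 : q^(k-1) ≤ 1 := pow_le_one₀ hq0.le hq1
    have hθσ : q^k ≤ q^(k-1) := pow_le_pow_of_le_one hq0.le hq1 (Nat.sub_le k 1)
    have hσθe : q^(k-1) - q^k ≤ 1 - q := by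
      cases k with
      | zero => simp; linarith
      | succ j =>
        have h1 : (j+1) - 1 = j := rfl
        rw [h1, pow_succ]
        have hj1 : q^j ≤ 1 := pow_le_one₀ hq0.le hq1
        have hj0 : 0 ≤ q^j := pow_nonneg hq0.le j
        nlinarith
    have hA0 : 0 ≤ q^(k-1)*(c*d*(1-q^k)) :=
      mul_nonneg hσ0 (mul_nonneg (by positivity) (by linarith))
    have hdist : ∀ t : ℝ, |t| ≤ 1 → D/2 ≤
        Complex.abs (x - ((q^k*(c-d) + 2*Real.sqrt (q^(k-1)*(c*d*(1-q^k)))*t : ℝ):ℂ)) :=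
      fun t ht => dist_bound c d hc hd x D hDle (q^k) (q^(k-1)) (1-q)
        hθ0 hθ1 hθσ hσ1 hσθe (by linarith) hkappa hD0 t ht
    obtain ⟨h1, h2, h3, h4⟩ := Gfacts x (q^k*(c-d)) (q^(k-1)*(c*d*(1-q^k))) (D/2)
      hA0 (by linarith) hdist (Gfun x c d (q^k, q^(k-1))) rfl
    refine ⟨h1, h2, h3, ?_⟩
    have habsB : Complex.abs (x - ((q^k*(c-d) : ℝ):ℂ)) ≤ Complex.abs x + (c+d) := by
      calc Complex.abs (x - ((q^k*(c-d) : ℝ):ℂ))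
          ≤ Complex.abs x + Complex.abs (((q^k*(c-d) : ℝ):ℂ)) := by
            rw [sub_eq_add_neg]
            exact (Complex.abs.add_le _ _).trans (by rw [Complex.abs.map_neg])
        _ ≤ Complex.abs x + (c+d) := by
            rw [Complex.abs_ofReal]
            have : |q^k*(c-d)| ≤ c+d := by
              rw [abs_mul, abs_of_nonneg hθ0]
              have : |c-d| ≤ c+d := abs_le.mpr ⟨by linarith, by linarith⟩
              nlinarith [abs_nonneg (c-d)]
            linarith
    have hsqA : Real.sqrt (q^(k-1)*(c*d*(1-q^k))) ≤ Real.sqrt (c*d) := by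
      apply Real.sqrt_le_sqrt
      have h6 : 0 ≤ c*d*(1-q^k) := mul_nonneg (by positivity) (by linarith)
      have h7 : q^(k-1)*(c*d*(1-q^k)) ≤ 1*(c*d*(1-q^k)) := mul_le_mul_of_nonneg_right hσ1 h6
      have h8 : c*d*(1-q^k) ≤ c*d := by nlinarith [mul_pos hc hd]
      linarith
    rw [hM]
    linarith
  -- the induction
  intro k
  induction k with
  | zero =>
    intro hk
    have hG00 : Gfun x c d (q^0, q^(0-1)) = x - (((c-d):ℝ):ℂ) := by
      have h0 : (0:ℕ) - 1 = 0 := rfl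
      rw [h0, pow_zero]
      unfold Gfun
      simp only
      have hA : (1:ℝ)*(c*d*(1-1)) = 0 := by ring
      rw [hA, Real.sqrt_zero]
      have e1 : (1*(c-d) + 2*0 : ℝ) = (1*(c-d) : ℝ) := by ring
      have e2 : (1*(c-d) - 2*0 : ℝ) = (1*(c-d) : ℝ) := by ring
      rw [e1, e2, csqrt_mul_self]
      have h3 : (1*(c-d) : ℝ) = (c-d : ℝ) := by ring
      rw [h3]; ring
    refine ⟨?_, ?_, ?_⟩
    · rw [hG00]
      have h4 : tseq x c d q 0 = x - (((c-d):ℝ):ℂ) := rfl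
      rw [h4, sub_self]
      simp only [map_zero]
      positivity
    · have h1 : PhatC (q:ℂ) (c:ℂ) (d:ℂ) 1 x = x - ((c:ℂ) - (d:ℂ)) := rfl
      have h0 : PhatC (q:ℂ) (c:ℂ) (d:ℂ) 0 x = 1 := rfl
      have h4 : tseq x c d q 0 = x - (((c-d):ℝ):ℂ) := rfl
      rw [h1, h0, h4]
      push_cast
      ring
    · intro h
      have h0 : PhatC (q:ℂ) (c:ℂ) (d:ℂ) 0 x = 1 := rfl
      rw [h0] at h
      exact one_ne_zero h
  | succ k ih =>
    intro hk
    have hkn : k ≤ n := Nat.le_of_succ_le hk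
    obtain ⟨ih1, ih2, ih3⟩ := ih hkn
    simp only [Nat.add_sub_cancel]
    obtain ⟨hq1k, hlb1, hquad1, hub1⟩ := hGf (k+1) hk
    obtain ⟨hq0k, hlb0, hquad0, hub0⟩ := hGf k hkn
    rw [Nat.add_sub_cancel] at hq1k hlb1 hquad1 hub1
    set τ1 : ℂ := Gfun x c d (q^(k+1), q^k) with hτ1def
    set τ0 : ℂ := Gfun x c d (q^k, q^(k-1)) with hτ0def
    set tk : ℂ := tseq x c d q k with htkdef
    set A : ℝ := q^k*(c*d*(1-q^(k+1))) with hAdef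
    have hA0 : 0 ≤ A := by
      rw [hAdef]
      have h5 : q^(k+1) ≤ 1 := pow_le_one₀ hq0.le hq1
      exact mul_nonneg (pow_nonneg hq0.le k) (mul_nonneg (by positivity) (by linarith))
    have hmv : Complex.abs (τ1 - τ0) ≤ eta := hmove k hk
    have habs_tk : |Complex.abs tk - Complex.abs τ0| ≤ Complex.abs (tk - τ0) :=
      Complex.abs.abs_abv_sub_le_abv_sub tk τ0
    have habs_τ1 : |Complex.abs τ1 - Complex.abs τ0| ≤ Complex.abs (τ1 - τ0) :=
      Complex.abs.abs_abv_sub_le_abv_sub τ1 τ0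
    have htk_lb : D/2 - D/32 ≤ Complex.abs tk := by
      have h2 := (abs_le.mp habs_tk).1
      linarith [hE32, hlb0, ih1]
    have htk0 : tk ≠ 0 := by
      intro h
      rw [h] at htk_lb
      simp only [map_zero] at htk_lb
      linarith
    have hτ10 : τ1 ≠ 0 := by
      intro h
      rw [h] at hlb1
      simp only [map_zero] at hlb1
      linarith
    have hτ1eq : τ1 = (x - ((q^(k+1)*(c-d) : ℝ):ℂ)) - ((A:ℝ):ℂ)/τ1 := by
      field_simp
      push_cast at hq1k ⊢
      linear_combination hq1k
    have ht1eq : tseq x c d q (k+1) = (x - ((q^(k+1)*(c-d) : ℝ):ℂ)) - ((A:ℝ):ℂ)/tk := rfl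
    have hdiff : tseq x c d q (k+1) - τ1 = ((A:ℝ):ℂ)*(tk - τ1)/(τ1*tk) := by
      rw [ht1eq]
      conv_lhs => rw [hτ1eq]
      field_simp
      ring
    have habsdiff : Complex.abs (tseq x c d q (k+1) - τ1)
        = A * Complex.abs (tk - τ1)/(Complex.abs τ1 * Complex.abs tk) := by
      rw [hdiff, map_div₀, map_mul, map_mul, Complex.abs_ofReal, abs_of_nonneg hA0]
    have h3 : Complex.abs (tk - τ1) ≤ E + eta := by
      have h5 : tk - τ1 = (tk - τ0) + (τ0 - τ1) := by ring
      have h6 : Complex.abs (τ0 - τ1) = Complex.abs (τ1 - τ0) := Complex.abs.map_sub _ _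
      calc Complex.abs (tk - τ1) = Complex.abs ((tk - τ0) + (τ0 - τ1)) := by rw [h5]
        _ ≤ Complex.abs (tk - τ0) + Complex.abs (τ0 - τ1) := Complex.abs.add_le _ _
        _ ≤ E + eta := by rw [h6]; linarith [ih1, hmv]
    have hτ1_le : Complex.abs τ1 ≤ Complex.abs τ0 + eta := by
      linarith [(abs_le.mp habs_τ1).2, hmv]
    have htk_ge : Complex.abs τ1 - eta - E ≤ Complex.abs tk := by
      linarith [(abs_le.mp habs_tk).1, ih1, hτ1_le]
    have hstep : Complex.abs τ1 - D/2 ≤ lam' * Complex.abs tk := by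
      have h1 : (1-lam')*(Complex.abs τ1) ≤ D/4 := by
        rw [← h1l'M]
        exact mul_le_mul_of_nonneg_left hub1 h1l'.le
      have h2 : lam' * (Complex.abs τ1 - eta - E) ≤ lam' * Complex.abs tk :=
        mul_le_mul_of_nonneg_left htk_ge (by linarith)
      nlinarith [mul_nonneg (by linarith : (0:ℝ) ≤ 1 - lam') (by linarith [heta0, hE0] : (0:ℝ) ≤ eta + E)]
    have hcore : A ≤ lam' * (Complex.abs τ1 * Complex.abs tk) := by
      have hs1 : A ≤ Complex.abs τ1 * (Complex.abs τ1 - D/2) := by nlinarith [hquad1]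
      calc A ≤ Complex.abs τ1 * (Complex.abs τ1 - D/2) := hs1
        _ ≤ Complex.abs τ1 * (lam' * Complex.abs tk) :=
            mul_le_mul_of_nonneg_left hstep (Complex.abs.nonneg _)
        _ = lam' * (Complex.abs τ1 * Complex.abs tk) := by ring
    have hP0 : 0 < Complex.abs τ1 * Complex.abs tk :=
      mul_pos (Complex.abs.pos hτ10) (Complex.abs.pos htk0)
    have hfinal1 : Complex.abs (tseq x c d q (k+1) - τ1) ≤ E := by
      rw [habsdiff, div_le_iff₀ hP0]
      calc A * Complex.abs (tk - τ1)
          ≤ (lam' * (Complex.abs τ1 * Complex.abs tk)) * Complex.abs (tk - τ1) :=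
            mul_le_mul_of_nonneg_right hcore (Complex.abs.nonneg _)
        _ = (lam' * Complex.abs (tk - τ1)) * (Complex.abs τ1 * Complex.abs tk) := by ring
        _ ≤ (lam' * (E + eta)) * (Complex.abs τ1 * Complex.abs tk) := by
            apply mul_le_mul_of_nonneg_right _ hP0.le
            exact mul_le_mul_of_nonneg_left h3 (by linarith)
        _ = E * (Complex.abs τ1 * Complex.abs tk) := by
            rw [hE_eq]
    have hcast1 : ((q^(k+1)*(c-d) : ℝ):ℂ) = (q:ℂ)^(k+1)*((c:ℂ)-(d:ℂ)) := by push_cast; ring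
    have hcast2 : ((A:ℝ):ℂ) = (q:ℂ)^k*(c:ℂ)*(d:ℂ)*(1 - (q:ℂ)^(k+1)) := by
      rw [hAdef]; push_cast; ring
    have hP2 : PhatC (q:ℂ) (c:ℂ) (d:ℂ) (k+2) x
        = (x - (q:ℂ)^(k+1)*((c:ℂ) - (d:ℂ))) * PhatC (q:ℂ) (c:ℂ) (d:ℂ) (k+1) x
          - (q:ℂ)^k*(c:ℂ)*(d:ℂ)*(1 - (q:ℂ)^(k+1)) * PhatC (q:ℂ) (c:ℂ) (d:ℂ) k x := rfl
    refine ⟨hfinal1, ?_, ?_⟩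
    · rw [show k+1+1 = k+2 from rfl, hP2, ih2, ← hcast1, ← hcast2, ht1eq]
      field_simp
    · rw [ih2]
      exact mul_ne_zero htk0 ih3


end csqrtAux

/-- Ratio asymptotics for the monic big q-Jacobi polynomials with `a = b = 0` under
the scaling `q = r^{1/n}`: the ratio `P̂_{n+1}/P̂_n` tends to
`√(rcd(1-r)) ρ((x - r(c-d))/(2√(rcd(1-r))))`, where `ρ(z) = z + √(z²-1)` with the
branch of the square root chosen so that `|ρ(z)| > 1` for `z ∉ [-1,1]`. -/
theorem bigqJacobi_ratio_asymptotics (r c d : ℝ) (hr0 : 0 < r) (hr1 : r < 1)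
    (hc : 0 < c) (hd : 0 < d) (x : ℂ)
    (hx : x ∉ {z : ℂ | z.im = 0 ∧ -d ≤ z.re ∧ z.re ≤ c}) :
    ∃ s : ℂ,
      s ^ 2 = ((x - (r : ℂ) * ((c : ℂ) - d)) / (2 * (Real.sqrt (r * c * d * (1 - r)) : ℂ))) ^ 2 - 1 ∧
      1 < ‖
          ((x - (r : ℂ) * ((c : ℂ) - d)) / (2 * (Real.sqrt (r * c * d * (1 - r)) : ℂ)) + s)‖ ∧
      Tendsto
        (fun n : ℕ =>
          PhatC ((r ^ (1 / (n : ℝ)) : ℝ) : ℂ) c d (n + 1) x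
            / PhatC ((r ^ (1 / (n : ℝ)) : ℝ) : ℂ) c d n x)
        atTop
        (nhds ((Real.sqrt (r * c * d * (1 - r)) : ℂ)
          * ((x - (r : ℂ) * ((c : ℂ) - d)) / (2 * (Real.sqrt (r * c * d * (1 - r)) : ℂ)) + s))) := by
  -- the compact set and distance
  set S : Set ℂ := {z : ℂ | z.im = 0 ∧ -d ≤ z.re ∧ z.re ≤ c} with hSdef
  have hSim : S = Complex.ofReal '' Set.Icc (-d) c := by
    ext z
    simp only [hSdef, Set.mem_setOf_eq, Set.mem_image, Set.mem_Icc]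
    constructor
    · rintro ⟨h1, h2, h3⟩
      exact ⟨z.re, ⟨h2, h3⟩, by apply Complex.ext <;> simp [h1.symm]⟩
    · rintro ⟨y, ⟨h1, h2⟩, rfl⟩
      refine ⟨by simp, by simpa using h1, by simpa using h2⟩
  have hScomp : IsCompact S := hSim ▸ (isCompact_Icc.image Complex.continuous_ofReal)
  have hSne : (0:ℂ) ∈ S := ⟨rfl, by simpa using hd.le, by simpa using hc.le⟩
  set D : ℝ := Metric.infDist x S with hDdef
  have hDle : ∀ y : ℝ, -d ≤ y → y ≤ c → D ≤ Complex.abs (x - (y:ℂ)) := by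
    intro y h1 h2
    have hy : (y:ℂ) ∈ S := ⟨by simp, by simpa using h1, by simpa using h2⟩
    have := Metric.infDist_le_dist_of_mem (x := x) hy
    rwa [Complex.dist_eq] at this
  have hD0 : 0 < D := by
    obtain ⟨y, hyS, hDy⟩ := hScomp.exists_infDist_eq_dist ⟨0, hSne⟩ x
    rw [hDdef, hDy, dist_pos]
    exact fun h => hx (h ▸ hyS)
  set M : ℝ := Complex.abs x + (c + d) + Real.sqrt (c*d) with hMdef
  have hDM : D ≤ M := by
    have h1 := hDle 0 (by linarith) (by linarith)
    simp only [Complex.ofReal_zero, sub_zero] at h1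
    have h2 : 0 ≤ Real.sqrt (c*d) := Real.sqrt_nonneg _
    rw [hMdef]; linarith
  have hM0 : 0 < M := lt_of_lt_of_le hD0 hDM
  set lam : ℝ := 1 - D/(2*M) with hlamdef
  set lam' : ℝ := (1+lam)/2 with hlam'def
  have hD2M : D/(2*M) ≤ 1/2 := by rw [div_le_iff₀ (by linarith)]; linarith
  have hD2M0 : 0 < D/(2*M) := by positivity
  have hlam_lb : 1/2 ≤ lam := by rw [hlamdef]; linarith
  have hlam_ub : lam < 1 := by rw [hlamdef]; linarith
  have hlam'_ub : lam' < 1 := by rw [hlam'def]; linarith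
  have h1l' : 0 < 1 - lam' := by linarith
  -- limit point facts
  have hAst0 : 0 < r*(c*d*(1-r)) :=
    mul_pos hr0 (mul_pos (mul_pos hc hd) (by linarith))
  set sq : ℝ := Real.sqrt (r*c*d*(1-r)) with hsqdef
  have hsqrw : Real.sqrt (r*(c*d*(1-r))) = sq := by
    rw [hsqdef, show r*(c*d*(1-r)) = r*c*d*(1-r) from by ring]
  have hsq0 : 0 < sq := by
    rw [hsqdef]; exact Real.sqrt_pos.mpr (by nlinarith)
  have hsqC : ((sq:ℝ):ℂ) ≠ 0 := by exact_mod_cast hsq0.ne'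
  have hdistL : ∀ t : ℝ, |t| ≤ 1 →
      D/2 ≤ Complex.abs (x - ((r*(c-d) + 2*Real.sqrt (r*(c*d*(1-r)))*t : ℝ):ℂ)) :=
    fun t ht => dist_bound c d hc hd x D hDle r r 0 hr0.le hr1.le le_rfl hr1.le
      (by linarith) le_rfl (by rw [mul_zero, Real.sqrt_zero]; linarith) hD0 t ht
  obtain ⟨hLquad, hLlb, hLq2, hLub⟩ := Gfacts x (r*(c-d)) (r*(c*d*(1-r))) (D/2)
    hAst0.le (by linarith) hdistL (Gfun x c d (r,r)) rfl
  set L : ℂ := Gfun x c d (r,r) with hLdef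
  set SS : ℂ := csqrt (x - ((r*(c-d) + 2*Real.sqrt (r*(c*d*(1-r))) : ℝ):ℂ)) *
      csqrt (x - ((r*(c-d) - 2*Real.sqrt (r*(c*d*(1-r))) : ℝ):ℂ)) with hSSdef
  have hLrfl : L = ((x - ((r*(c-d) : ℝ):ℂ)) + SS)/2 := rfl
  have hBw : ((r*(c-d) : ℝ):ℂ) = (r:ℂ)*((c:ℂ)-(d:ℂ)) := by push_cast; ring
  have hsq2 : ((sq:ℝ):ℂ)^2 = ((r*(c*d*(1-r)) : ℝ):ℂ) := by
    rw [hsqdef]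
    norm_cast
    rw [Real.sq_sqrt (by nlinarith)]
    ring
  have hS2 : SS^2 = (x - ((r*(c-d):ℝ):ℂ))^2 - 4*((r*(c*d*(1-r)) : ℝ):ℂ) := by
    rw [hSSdef, show (csqrt (x - ((r*(c-d) + 2*Real.sqrt (r*(c*d*(1-r))) : ℝ):ℂ)) *
      csqrt (x - ((r*(c-d) - 2*Real.sqrt (r*(c*d*(1-r))) : ℝ):ℂ)))^2
      = (csqrt (x - ((r*(c-d) + 2*Real.sqrt (r*(c*d*(1-r))) : ℝ):ℂ)) *
         csqrt (x - ((r*(c-d) + 2*Real.sqrt (r*(c*d*(1-r))) : ℝ):ℂ))) *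
        (csqrt (x - ((r*(c-d) - 2*Real.sqrt (r*(c*d*(1-r))) : ℝ):ℂ)) *
         csqrt (x - ((r*(c-d) - 2*Real.sqrt (r*(c*d*(1-r))) : ℝ):ℂ))) from by ring,
      csqrt_mul_self, csqrt_mul_self]
    have h2 : ((Real.sqrt (r*(c*d*(1-r))) : ℝ):ℂ)^2 = ((r*(c*d*(1-r)) : ℝ):ℂ) := by
      norm_cast
      exact Real.sq_sqrt (by nlinarith)
    push_cast at h2 ⊢
    linear_combination -4*h2
  set w : ℂ := (x - (r : ℂ) * ((c : ℂ) - d)) / (2 * ((sq:ℝ) : ℂ)) with hwdef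
  set s : ℂ := SS / (2*((sq:ℝ):ℂ)) with hsdef
  have hS2' : SS^2 = (x - (r:ℂ)*((c:ℂ)-(d:ℂ)))^2 - 4*((sq:ℝ):ℂ)^2 := by
    rw [hS2, hBw, hsq2]
  have hs_sq : s^2 = w^2 - 1 := by
    have h8 : s^2 = (SS^2)/(4*((sq:ℝ):ℂ)^2) := by rw [hsdef]; ring
    have hw2 : w^2 = (x - (r:ℂ)*((c:ℂ)-(d:ℂ)))^2/(4*((sq:ℝ):ℂ)^2) := by rw [hwdef]; ring
    rw [h8, hS2', hw2]
    field_simp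
  have hws : w + s = L / ((sq:ℝ):ℂ) := by
    rw [hsdef, hwdef, ← hBw, hLrfl]
    field_simp
  have hsqltL : sq < Complex.abs L := by
    have h1 : sq^2 = r*(c*d*(1-r)) := by
      rw [hsqdef]; rw [Real.sq_sqrt (by nlinarith)]; ring
    nlinarith [hLq2, hLlb, hD0]
  have hwsabs : 1 < Complex.abs (w + s) := by
    rw [hws, map_div₀, Complex.abs_ofReal, abs_of_pos hsq0, lt_div_iff₀ hsq0]
    linarith
  have hval : ((sq:ℝ):ℂ) * (w + s) = L := by
    rw [hws, mul_div_cancel₀ _ hsqC]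
  refine ⟨s, hs_sq, hwsabs, ?_⟩
  rw [show (x - (r : ℂ) * ((c : ℂ) - d)) / (2 * ((Real.sqrt (r * c * d * (1 - r)) : ℝ) : ℂ)) + s
    = w + s from rfl, hval]
  -- now prove Tendsto ... (nhds L)
  rw [Metric.tendsto_atTop]
  intro ε hε
  set eta : ℝ := min ((1-lam)*D/16*(1-lam')) (ε*(1-lam')/2) with hetadef
  have heta0 : 0 < eta := by
    apply lt_min
    · have : 0 < 1 - lam := by linarith
      positivity
    · positivity
  have hUC := (isCompact_Icc.prod isCompact_Icc).uniformContinuousOn_of_continuous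
    ((Gfun_continuous x c d).continuousOn (s := Set.Icc r 1 ×ˢ Set.Icc r 1))
  obtain ⟨δ, hδ0, hδ⟩ := Metric.uniformContinuousOn_iff.mp hUC eta heta0
  have hexp : Tendsto (fun n : ℕ => 1/(n:ℝ)) atTop (nhds 0) := tendsto_one_div_atTop_nhds_zero_nat
  have hrpow : ∀ y₀ : ℝ, Tendsto (fun y : ℝ => r ^ y) (nhds y₀) (nhds (r ^ y₀)) := by
    intro y₀
    have hfe : (fun y : ℝ => r ^ y) = fun y => Real.exp (Real.log r * y) :=
      funext fun y => Real.rpow_def_of_pos hr0 y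
    rw [hfe]
    have hcont : Continuous fun y : ℝ => Real.exp (Real.log r * y) :=
      Real.continuous_exp.comp (continuous_const.mul continuous_id)
    have h0 : Real.exp (Real.log r * y₀) = r ^ y₀ := (Real.rpow_def_of_pos hr0 y₀).symm
    simpa [h0] using hcont.tendsto y₀
  have htend1 : Tendsto (fun n : ℕ => 1 - r^(1/(n:ℝ))) atTop (nhds 0) := by
    have h1 : Tendsto (fun n : ℕ => r^(1/(n:ℝ))) atTop (nhds 1) := by
      have := (hrpow 0).comp hexp
      simpa [Real.rpow_zero, Function.comp_def] using this
    simpa using h1.const_sub 1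
  have hbpos : 0 < min δ (D^2/(16*(c*d))) := lt_min hδ0 (by positivity)
  have hev2 : ∀ᶠ n : ℕ in atTop, 1 - r^(1/(n:ℝ)) < min δ (D^2/(16*(c*d))) :=
    htend1.eventually (gt_mem_nhds hbpos)
  have hτtend : Tendsto (fun n : ℕ => Gfun x c d (r, r^(1-1/(n:ℝ)))) atTop (nhds L) := by
    have h2 : Tendsto (fun n : ℕ => r^(1-1/(n:ℝ))) atTop (nhds r) := by
      have h3 : Tendsto (fun n : ℕ => 1-1/(n:ℝ)) atTop (nhds 1) := by
        simpa using hexp.const_sub 1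
      have := (hrpow 1).comp h3
      simpa [Real.rpow_one, Function.comp_def] using this
    have hpair : Tendsto (fun n : ℕ => ((r : ℝ), r^(1-1/(n:ℝ)))) atTop (nhds ((r:ℝ), (r:ℝ))) :=
      tendsto_const_nhds.prodMk_nhds h2
    exact ((Gfun_continuous x c d).continuousAt.tendsto).comp hpair
  have hev3 : ∀ᶠ n : ℕ in atTop, dist (Gfun x c d (r, r^(1-1/(n:ℝ)))) L < ε/2 :=
    Metric.tendsto_nhds.mp hτtend (ε/2) (by positivity)
  have hev1 : ∀ᶠ n : ℕ in atTop, 1 ≤ n := eventually_ge_atTop 1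
  rw [Filter.eventually_atTop] at hev1 hev2 hev3
  obtain ⟨N1, hN1⟩ := hev1
  obtain ⟨N2, hN2⟩ := hev2
  obtain ⟨N3, hN3⟩ := hev3
  refine ⟨max N1 (max N2 N3), fun n hn => ?_⟩
  have hn1 : 1 ≤ n := hN1 n (le_trans (le_max_left _ _) hn)
  have hn2 := hN2 n (le_trans ((le_max_left _ _).trans (le_max_right _ _)) hn)
  have hn3 := hN3 n (le_trans ((le_max_right _ _).trans (le_max_right _ _)) hn)
  have hnR : (0:ℝ) < (n:ℝ) := by exact_mod_cast hn1
  set q : ℝ := r^(1/(n:ℝ)) with hqdef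
  have hq0 : 0 < q := Real.rpow_pos_of_pos hr0 _
  have hq1 : q ≤ 1 := Real.rpow_le_one hr0.le hr1.le (by positivity)
  have hqn : q^n = r := by
    rw [hqdef, ← Real.rpow_natCast (r^(1/(n:ℝ))) n, ← Real.rpow_mul hr0.le]
    rw [one_div, inv_mul_cancel₀ hnR.ne', Real.rpow_one]
  have hqn1 : q^(n-1) = r^(1-1/(n:ℝ)) := by
    rw [hqdef, ← Real.rpow_natCast (r^(1/(n:ℝ))) (n-1), ← Real.rpow_mul hr0.le]
    congr 1
    rw [Nat.cast_sub hn1, Nat.cast_one]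
    field_simp
  have hkappa : 2*Real.sqrt (c*d*(1-q)) ≤ D/2 := by
    have h1 : 1 - q < D^2/(16*(c*d)) := lt_of_lt_of_le hn2 (min_le_right _ _)
    have h2 : c*d*(1-q) ≤ D^2/16 := by
      have hcd : 0 < c*d := mul_pos hc hd
      have h1' : (1-q)*(c*d) < D^2/(16*(c*d))*(c*d) := mul_lt_mul_of_pos_right h1 hcd
      have h1'' : D^2/(16*(c*d))*(c*d) = D^2/16 := by field_simp
      nlinarith
    have h3 : Real.sqrt (c*d*(1-q)) ≤ Real.sqrt (D^2/16) := Real.sqrt_le_sqrt h2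
    have h4 : Real.sqrt (D^2/16) = D/4 := by
      rw [show D^2/16 = (D/4)^2 from by ring, Real.sqrt_sq (by linarith)]
    linarith
  have hmove : ∀ k, k < n →
      Complex.abs (Gfun x c d (q^(k+1), q^k) - Gfun x c d (q^k, q^(k-1))) ≤ eta := by
    intro k hkn
    have hmem : ∀ j : ℕ, j ≤ n → q^j ∈ Set.Icc r 1 := by
      intro j hj
      constructor
      · rw [← hqn]; exact pow_le_pow_of_le_one hq0.le hq1 hj
      · exact pow_le_one₀ hq0.le hq1
    have hm1 : (q^(k+1), q^k) ∈ Set.Icc r 1 ×ˢ Set.Icc r 1 :=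
      Set.mem_prod.mpr ⟨hmem _ hkn, hmem _ (le_of_lt hkn)⟩
    have hm0 : (q^k, q^(k-1)) ∈ Set.Icc r 1 ×ˢ Set.Icc r 1 :=
      Set.mem_prod.mpr ⟨hmem _ (le_of_lt hkn), hmem _ (le_trans (Nat.sub_le k 1) (le_of_lt hkn))⟩
    have hgap : ∀ j : ℕ, |q^(j+1) - q^j| ≤ 1 - q := by
      intro j
      have h1 : q^(j+1) ≤ q^j := pow_le_pow_of_le_one hq0.le hq1 (Nat.le_succ j)
      have h2 : q^j ≤ 1 := pow_le_one₀ hq0.le hq1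
      have h3 : 0 ≤ q^j := pow_nonneg hq0.le j
      rw [abs_of_nonpos (by linarith), pow_succ]
      nlinarith
    have hd1 : dist (q^(k+1)) (q^k) < δ := by
      rw [Real.dist_eq]
      calc |q^(k+1) - q^k| ≤ 1 - q := hgap k
        _ < δ := lt_of_lt_of_le hn2 (min_le_left _ _)
    have hd2 : dist (q^k) (q^(k-1)) < δ := by
      cases k with
      | zero => simpa using hδ0
      | succ j =>
        rw [Real.dist_eq]
        have : (j+1) - 1 = j := rfl
        rw [this]
        calc |q^(j+1) - q^j| ≤ 1 - q := hgap j
          _ < δ := lt_of_lt_of_le hn2 (min_le_left _ _)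
    have hdp : dist ((q^(k+1), q^k) : ℝ × ℝ) (q^k, q^(k-1)) < δ := by
      rw [Prod.dist_eq]
      exact max_lt hd1 hd2
    have := hδ _ hm1 _ hm0 hdp
    rw [Complex.dist_eq] at this
    exact le_of_lt this
  obtain ⟨hfin1, hfin2, hfin3⟩ := fixedn r c d hc hd x D M lam lam' eta hD0 hDle hMdef hDM
    hlamdef hlam'def heta0 (min_le_left _ _) q hq0 hq1 n hkappa hmove n le_rfl
  have hratio : PhatC (q:ℂ) (c:ℂ) (d:ℂ) (n+1) x / PhatC (q:ℂ) (c:ℂ) (d:ℂ) n x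
      = tseq x c d q n := by
    rw [hfin2, mul_div_assoc, div_self hfin3, mul_one]
  have hEε : eta*lam'/(1-lam') ≤ ε/2 := by
    have h4 : eta ≤ ε*(1-lam')/2 := min_le_right _ _
    have h5 : eta*lam' ≤ eta*1 := by
      apply mul_le_mul_of_nonneg_left hlam'_ub.le heta0.le
    rw [div_le_iff₀ h1l']
    nlinarith [hε]
  have hτn : Gfun x c d (q^n, q^(n-1)) = Gfun x c d (r, r^(1-1/(n:ℝ))) := by
    rw [hqn, hqn1]
  calc dist (PhatC (q:ℂ) (c:ℂ) (d:ℂ) (n+1) x / PhatC (q:ℂ) (c:ℂ) (d:ℂ) n x) L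
      = dist (tseq x c d q n) L := by rw [hratio]
    _ ≤ dist (tseq x c d q n) (Gfun x c d (q^n, q^(n-1)))
        + dist (Gfun x c d (q^n, q^(n-1))) L := dist_triangle _ _ _
    _ < ε/2 + ε/2 := by
        apply add_lt_add_of_le_of_lt
        · rw [Complex.dist_eq]
          exact le_trans hfin1 hEε
        · rw [hτn]; exact hn3
    _ = ε := by ring
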